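/- Let w̃ : [0, ξ̄] → ℝ be C¹, strictly decreasing, with w̃(0) = π/2, w̃(ξ̄) = 0, and satisfying w̃'(ξ) = −√|k|/√(sin(w̃(ξ))) on (0, ξ̄) for some k ≠ 0. Then 1/√|k| ≤ ξ̄ ≤ π/(2√|k|). -/

import Mathlib

theorem stmt_12 (k ξ' : ℝ) (hk : k ≠ 0) (hξ : 0 < ξ')
    (w : ℝ → ℝ)
    (hw : ContDiffOn ℝ 1 w (Set.Icc 0 ξ'))
    (hanti : StrictAntiOn w (Set.Icc 0 ξ'))
    (h0 : w 0 = Real.pi / 2) (h1 : w ξ' = 0)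
    (hode : ∀ ξ ∈ Set.Ioo 0 ξ',
      deriv w ξ = -Real.sqrt |k| / Real.sqrt (Real.sin (w ξ))) :
    1 / Real.sqrt |k| ≤ ξ' ∧ ξ' ≤ Real.pi / (2 * Real.sqrt |k|) := by
  have hk0 : 0 < Real.sqrt |k| := Real.sqrt_pos.2 (abs_pos.2 hk)
  set F : ℝ → ℝ := fun x => ∫ t in (0:ℝ)..x, Real.sqrt (Real.sin t) with hF
  have hfc : Continuous fun t => Real.sqrt (Real.sin t) := Real.continuous_sin.sqrt
  have hFderiv : ∀ x : ℝ, HasDerivAt F (Real.sqrt (Real.sin x)) x := by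
    intro x
    exact intervalIntegral.integral_hasDerivAt_right
      (hfc.intervalIntegrable _ _)
      (hfc.stronglyMeasurableAtFilter _ _) hfc.continuousAt
  -- w maps interior into (0, π/2)
  have hwmem : ∀ ξ ∈ Set.Ioo 0 ξ', w ξ ∈ Set.Ioo 0 (Real.pi / 2) := by
    intro ξ hm
    have h0m : (0:ℝ) ∈ Set.Icc 0 ξ' := ⟨le_refl _, le_of_lt hξ⟩
    have hξm : ξ ∈ Set.Icc 0 ξ' := ⟨le_of_lt hm.1, le_of_lt hm.2⟩
    have hξ'm : ξ' ∈ Set.Icc 0 ξ' := ⟨le_of_lt hξ, le_refl _⟩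
    constructor
    · have := hanti hξm hξ'm hm.2; rw [h1] at this; linarith
    · have := hanti h0m hξm hm.1; rw [h0] at this; linarith
  have hsinpos : ∀ ξ ∈ Set.Ioo 0 ξ', 0 < Real.sin (w ξ) := by
    intro ξ hm
    have h := hwmem ξ hm
    exact Real.sin_pos_of_pos_of_lt_pi h.1 (lt_of_lt_of_le h.2 (by linarith [Real.pi_pos]))
  have hdw : ∀ ξ ∈ Set.Ioo 0 ξ', HasDerivAt w (deriv w ξ) ξ := by
    intro ξ hm
    have hnb : Set.Icc 0 ξ' ∈ nhds ξ := Icc_mem_nhds hm.1 hm.2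
    exact ((hw.differentiableOn one_ne_zero).differentiableAt hnb).hasDerivAt
  set H : ℝ → ℝ := fun ξ => F (w ξ) + Real.sqrt |k| * ξ with hH
  have hHderiv : ∀ ξ ∈ Set.Ioo 0 ξ', HasDerivAt H 0 ξ := by
    intro ξ hm
    have h1' : HasDerivAt (fun ξ => F (w ξ)) (Real.sqrt (Real.sin (w ξ)) * deriv w ξ) ξ :=
      (hFderiv (w ξ)).comp ξ (hdw ξ hm)
    have h2' : HasDerivAt (fun ξ : ℝ => Real.sqrt |k| * ξ) (Real.sqrt |k|) ξ := by
      simpa using (hasDerivAt_id ξ).const_mul (Real.sqrt |k|)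
    have := h1'.add h2'
    refine this.congr_deriv (Eq.symm ?_)
    rw [hode ξ hm]
    have hs : Real.sqrt (Real.sin (w ξ)) ≠ 0 :=
      ne_of_gt (Real.sqrt_pos.2 (hsinpos ξ hm))
    field_simp
    ring
  have hHcont : ContinuousOn H (Set.Icc 0 ξ') := by
    have hFc : Continuous F := by
      apply continuous_iff_continuousAt.2
      intro x; exact (hFderiv x).continuousAt
    exact (hFc.comp_continuousOn hw.continuousOn).add
      (continuous_const.mul continuous_id).continuousOn
  have hHdiff : DifferentiableOn ℝ H (interior (Set.Icc 0 ξ')) := by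
    rw [interior_Icc]
    intro x hx
    exact ((hHderiv x hx).differentiableAt).differentiableWithinAt
  have hHd0 : ∀ x ∈ interior (Set.Icc 0 ξ'), deriv H x = 0 := by
    rw [interior_Icc]
    intro x hx; exact (hHderiv x hx).deriv
  have hmono : MonotoneOn H (Set.Icc 0 ξ') :=
    monotoneOn_of_deriv_nonneg (convex_Icc _ _) hHcont hHdiff
      (fun x hx => le_of_eq (hHd0 x hx).symm)
  have hanti' : AntitoneOn H (Set.Icc 0 ξ') :=
    antitoneOn_of_deriv_nonpos (convex_Icc _ _) hHcont hHdiff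
      (fun x hx => le_of_eq (hHd0 x hx))
  have h0m : (0:ℝ) ∈ Set.Icc 0 ξ' := ⟨le_refl _, le_of_lt hξ⟩
  have hξ'm : ξ' ∈ Set.Icc 0 ξ' := ⟨le_of_lt hξ, le_refl _⟩
  have hHeq : H ξ' = H 0 :=
    le_antisymm (hanti' h0m hξ'm (le_of_lt hξ)) (hmono h0m hξ'm (le_of_lt hξ))
  have hF0 : F 0 = 0 := intervalIntegral.integral_same
  have hkey : Real.sqrt |k| * ξ' = F (Real.pi / 2) := by
    have := hHeq
    simp only [hH, h0, h1, hF0] at this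
    linarith
  -- bounds on F (π/2)
  have hlow : 1 ≤ F (Real.pi / 2) := by
    have hmono' : ∫ t in (0:ℝ)..(Real.pi/2), Real.sin t ≤ F (Real.pi / 2) := by
      apply intervalIntegral.integral_mono_on (by positivity)
        (Real.continuous_sin.intervalIntegrable _ _)
        (hfc.intervalIntegrable _ _)
      intro t ht
      have hs0 : 0 ≤ Real.sin t := Real.sin_nonneg_of_nonneg_of_le_pi ht.1
        (le_trans ht.2 (by linarith [Real.pi_pos]))
      have hs1 : Real.sin t ≤ 1 := Real.sin_le_one t
      nlinarith [Real.sq_sqrt hs0, Real.sqrt_nonneg (Real.sin t)]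
    rw [integral_sin] at hmono'
    simpa using hmono'
  have hhigh : F (Real.pi / 2) ≤ Real.pi / 2 := by
    have hmono' : F (Real.pi / 2) ≤ ∫ _t in (0:ℝ)..(Real.pi/2), (1:ℝ) := by
      apply intervalIntegral.integral_mono_on (by positivity)
        (hfc.intervalIntegrable _ _)
        (intervalIntegrable_const)
      intro t ht
      exact Real.sqrt_le_one.2 (Real.sin_le_one t)
    simpa using hmono'
  constructor
  · rw [div_le_iff₀ hk0]
    nlinarith
  · rw [le_div_iff₀ (by positivity)]
    nlinarith
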